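/- Let Λ be a finite Borel measure on [0,τ], g : [0,τ] → [0,∞) a measurable function, and S : [0,τ] → [0,∞) a Lebesgue-measurable function. Then ∫_0^τ ∫_0^τ S(t) S(s) (∫_{[0, min(s,t)]} g dΛ) dt ds = ∫_{[0,τ]} (∫_x^τ S(t) dt)² g(x) dΛ(x), where the outer double integral is with respect to Lebesgue measure on [0,τ]² and ∫_x^τ S(t) dt denotes the Lebesgue integral of S over [x,τ]. (Both sides may be +∞ simultaneously.) -/

import Mathlib

open MeasureTheory ProbabilityTheory Filter Set
open scoped ENNReal NNReal Topology BoundedContinuousFunction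

noncomputable section

namespace RMST

/-- **Fubini/Tonelli identity for the asymptotic RMST variance**: for a finite
Borel measure `Λ` on `[0,τ]` and nonnegative measurable `g`, `S`,
`∫_0^τ∫_0^τ S(t)S(s) (∫_{[0,min(s,t)]} g dΛ) dt ds
  = ∫_{[0,τ]} (∫_x^τ S(t)dt)² g(x) dΛ(x)`,
both sides possibly being `+∞` simultaneously. -/
theorem rmst_variance_fubini
    (τ : ℝ) (hτ : 0 < τ)
    (Λ : Measure ℝ) [IsFiniteMeasure Λ] (hΛ : Λ (Set.Icc (0:ℝ) τ)ᶜ = 0)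
    (g : ℝ → ℝ) (hg : Measurable g) (hg0 : ∀ x, 0 ≤ g x)
    (S : ℝ → ℝ) (hS : Measurable S) (hS0 : ∀ x, 0 ≤ S x) :
    ∫⁻ t in Set.Icc (0:ℝ) τ, ∫⁻ s in Set.Icc (0:ℝ) τ,
        (ENNReal.ofReal (S t) * ENNReal.ofReal (S s)
          * ∫⁻ x in Set.Icc (0:ℝ) (min s t), ENNReal.ofReal (g x) ∂Λ)
      = ∫⁻ x in Set.Icc (0:ℝ) τ,
          ((∫⁻ t in Set.Icc x τ, ENNReal.ofReal (S t)) ^ 2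
            * ENNReal.ofReal (g x)) ∂Λ := by

  classical
  set Se : ℝ → ℝ≥0∞ := fun t => ENNReal.ofReal (S t) with hSe
  set ge : ℝ → ℝ≥0∞ := fun x => ENNReal.ofReal (g x) with hge
  have hSem : Measurable Se := hS.ennreal_ofReal
  have hgem : Measurable ge := hg.ennreal_ofReal
  set μ : Measure ℝ := volume.restrict (Icc (0:ℝ) τ) with hμ
  set ν : Measure ℝ := Λ.restrict (Icc (0:ℝ) τ) with hν
  set F : ℝ → ℝ → ℝ → ℝ≥0∞ := fun t s x =>
    Se t * Se s * ((Icc (0:ℝ) (min s t)).indicator ge x) with hFdef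
  have hFm : Measurable (fun p : ℝ × ℝ × ℝ => F p.1 p.2.1 p.2.2) := by
    apply Measurable.mul
    · exact (hSem.comp measurable_fst).mul
        (hSem.comp (measurable_fst.comp measurable_snd))
    · have heq : (fun p : ℝ × ℝ × ℝ => (Icc (0:ℝ) (min p.2.1 p.1)).indicator ge p.2.2)
        = Set.indicator ({p : ℝ × ℝ × ℝ | 0 ≤ p.2.2} ∩ {p : ℝ × ℝ × ℝ | p.2.2 ≤ min p.2.1 p.1})
            (fun p => ge p.2.2) := by
        ext p
        by_cases h : p.2.2 ∈ Icc (0:ℝ) (min p.2.1 p.1)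
        · rw [Set.indicator_of_mem h, Set.indicator_of_mem]
          exact ⟨h.1, h.2⟩
        · rw [Set.indicator_of_notMem h, Set.indicator_of_notMem]
          intro hc
          exact h ⟨hc.1, hc.2⟩
      rw [heq]
      apply Measurable.indicator (hgem.comp (measurable_snd.comp measurable_snd))
      exact (measurableSet_le measurable_const (measurable_snd.comp measurable_snd)).inter
        (measurableSet_le (measurable_snd.comp measurable_snd)
          ((measurable_fst.comp measurable_snd).min measurable_fst))
  have hindm : ∀ t s : ℝ, Measurable fun x => (Icc (0:ℝ) (min s t)).indicator ge x :=
    fun t s => hgem.indicator measurableSet_Icc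
  -- Step 1: rewrite LHS as a triple integral over restricted measures
  have step1 : ∫⁻ t in Icc (0:ℝ) τ, ∫⁻ s in Icc (0:ℝ) τ,
      (Se t * Se s * ∫⁻ x in Icc (0:ℝ) (min s t), ge x ∂Λ)
      = ∫⁻ t, ∫⁻ s, ∫⁻ x, F t s x ∂ν ∂μ ∂μ := by
    refine setLIntegral_congr_fun measurableSet_Icc (fun t ht => ?_)
    refine setLIntegral_congr_fun measurableSet_Icc (fun s hs => ?_)
    have hsub : Icc (0:ℝ) (min s t) ⊆ Icc (0:ℝ) τ :=
      Icc_subset_Icc le_rfl ((min_le_left s t).trans hs.2)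
    rw [hFdef]
    simp only
    rw [lintegral_const_mul (Se t * Se s) (hindm t s), hν,
      lintegral_indicator measurableSet_Icc, Measure.restrict_restrict measurableSet_Icc,
      inter_eq_self_of_subset_left hsub]
  rw [step1]
  -- Step 2: swap s and x
  have step2 : ∀ t : ℝ, ∫⁻ s, ∫⁻ x, F t s x ∂ν ∂μ = ∫⁻ x, ∫⁻ s, F t s x ∂μ ∂ν := by
    intro t
    refine lintegral_lintegral_swap ?_
    exact (hFm.comp ((measurable_const.prodMk (measurable_fst.prodMk
      measurable_snd)) : Measurable fun q : ℝ × ℝ => (t, q.1, q.2))).aemeasurable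
  simp_rw [step2]
  -- Step 3: swap t and x
  have step3 : ∫⁻ t, ∫⁻ x, ∫⁻ s, F t s x ∂μ ∂ν ∂μ
      = ∫⁻ x, ∫⁻ t, ∫⁻ s, F t s x ∂μ ∂μ ∂ν := by
    refine lintegral_lintegral_swap ?_
    have : Measurable fun q : ℝ × ℝ => ∫⁻ s, F q.1 s q.2 ∂μ := by
      apply Measurable.lintegral_prod_right'
        (f := fun p : (ℝ × ℝ) × ℝ => F p.1.1 p.2 p.1.2)
      exact hFm.comp (((measurable_fst.comp measurable_fst).prodMk
        (measurable_snd.prodMk (measurable_snd.comp measurable_fst))))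
    exact this.aemeasurable
  rw [step3, hν]
  -- Step 4: compute the inner double integral for each x in [0, τ]
  refine setLIntegral_congr_fun measurableSet_Icc (fun x hx => ?_)
  set A : ℝ≥0∞ := ∫⁻ s in Icc x τ, Se s with hA
  have hindA : ∫⁻ s in Icc (0:ℝ) τ, (Icc x τ).indicator Se s = A := by
    rw [lintegral_indicator measurableSet_Icc, Measure.restrict_restrict measurableSet_Icc,
      inter_eq_self_of_subset_left (Icc_subset_Icc hx.1 le_rfl)]
  have hpt : ∀ t ∈ Icc (0:ℝ) τ, ∀ s ∈ Icc (0:ℝ) τ,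
      F t s x = (Icc x τ).indicator Se t * ((Icc x τ).indicator Se s * ge x) := by
    intro t ht s hs
    rw [hFdef]
    simp only [Set.indicator_apply, Set.mem_Icc, le_min_iff]
    by_cases hxt : x ≤ t <;> by_cases hxs : x ≤ s <;>
      simp [hxt, hxs, hx.1, ht.2, hs.2] <;> ring
  have hinner : ∀ t ∈ Icc (0:ℝ) τ,
      ∫⁻ s, F t s x ∂μ = (Icc x τ).indicator Se t * (A * ge x) := by
    intro t ht
    rw [hμ]
    rw [setLIntegral_congr_fun measurableSet_Icc
      (fun s hs => hpt t ht s hs)]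
    rw [show (fun s => (Icc x τ).indicator Se t * ((Icc x τ).indicator Se s * ge x))
        = fun s => ((Icc x τ).indicator Se t * ge x) * (Icc x τ).indicator Se s by
      funext s; ring]
    rw [lintegral_const_mul _ (hSem.indicator measurableSet_Icc), hindA]
    ring
  calc ∫⁻ t, ∫⁻ s, F t s x ∂μ ∂μ
      = ∫⁻ t in Icc (0:ℝ) τ, (Icc x τ).indicator Se t * (A * ge x) := by
        rw [hμ]
        exact setLIntegral_congr_fun measurableSet_Icc
          (fun t ht => hinner t ht)
    _ = A * (A * ge x) := by
        rw [lintegral_mul_const _ (hSem.indicator measurableSet_Icc), hindA, mul_comm]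
    _ = (∫⁻ t in Icc x τ, Se t) ^ 2 * ge x := by rw [← hA]; ring


end RMST
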